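/- Let β be an alternating bicharacter of type II on a finite abelian group T. Then either T ≅ (ℤ₂ × ℤ₂)^m × ℤ₂ or T ≅ (ℤ₂ × ℤ₂)^{m−1} × (ℤ₂ × ℤ₄) for some m, and there exists a symplectic family {a₁, b₁, …, a_m, b_m} in T such that: in the first case {a₁, b₁, …, a_m, b_m, f_β} is a basis of T; in the second case b_m² = f_β and {a₁, b₁, …, a_m, b_m} is a basis of T. -/

import Mathlib

/-- An alternating bicharacter on a (multiplicative) finite abelian group `T`,
with values in `ℝˣ`. -/
def IsAltBichar {T : Type*} [CommGroup T] (β : T → T → ℝˣ) : Prop :=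
  (∀ u v w : T, β (u * v) w = β u w * β v w) ∧
  (∀ u v w : T, β u (v * w) = β u v * β u w) ∧
  (∀ u : T, β u u = 1)

/-- A family `c : ι → T` is a basis of `T` if `T` is the internal direct product of the
cyclic subgroups `⟨c i⟩`, i.e. the natural product map is bijective. -/
def IsBasisFamily {T : Type*} [CommGroup T] {ι : Type*} [Fintype ι] (c : ι → T) : Prop :=
  Function.Bijective (fun x : (∀ i : ι, Subgroup.zpowers (c i)) => ∏ i : ι, (x i : T))

/-- A family `a₁,b₁,…,a_m,b_m` is symplectic with respect to `β` if
`β(aᵢ,bᵢ) = β(bᵢ,aᵢ) = -1` and `β` takes the value `+1` on all other pairs. -/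
def IsSymplecticFamily {T : Type*} [CommGroup T] (β : T → T → ℝˣ) {m : ℕ}
    (a b : Fin m → T) : Prop :=
  (∀ i, β (a i) (b i) = -1 ∧ β (b i) (a i) = -1) ∧
  (∀ i j, β (a i) (a j) = 1) ∧ (∀ i j, β (b i) (b j) = 1) ∧
  (∀ i j, i ≠ j → β (a i) (b j) = 1 ∧ β (b i) (a j) = 1)

section Prelim

variable {T : Type*} [CommGroup T] {β : T → T → ℝˣ} (hβ : IsAltBichar β)

include hβ

/-- left multiplicativity -/
lemma bich_one_left (v : T) : β 1 v = 1 := by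
  have h := hβ.1 1 1 v
  rw [one_mul] at h
  exact left_eq_mul.mp h

lemma bich_one_right (u : T) : β u 1 = 1 := by
  have h := hβ.2.1 u 1 1
  rw [one_mul] at h
  exact left_eq_mul.mp h

/-- as monoid hom in first variable -/
def bichL (v : T) : T →* ℝˣ :=
  MonoidHom.mk' (fun t => β t v) (fun a b => hβ.1 a b v)

def bichR (u : T) : T →* ℝˣ :=
  MonoidHom.mk' (fun t => β u t) (fun a b => hβ.2.1 u a b)

lemma bich_zpow_left (u v : T) (k : ℤ) : β (u ^ k) v = (β u v) ^ k :=
  map_zpow (bichL hβ v) u k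

lemma bich_zpow_right (u v : T) (k : ℤ) : β u (v ^ k) = (β u v) ^ k :=
  map_zpow (bichR hβ u) v k

lemma bich_pow_left (u v : T) (k : ℕ) : β (u ^ k) v = (β u v) ^ k :=
  map_pow (bichL hβ v) u k

lemma bich_pow_right (u v : T) (k : ℕ) : β u (v ^ k) = (β u v) ^ k :=
  map_pow (bichR hβ u) v k

omit hβ in
lemma units_real_pm {x : ℝˣ} {n : ℕ} (hn : 0 < n) (hx : x ^ n = 1) : x = 1 ∨ x = -1 := by
  have hx' : (x : ℝ) ^ n = 1 := by
    have := congrArg (Units.val) hx; push_cast at this; exact this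
  rcases (pow_eq_one_iff_of_ne_zero hn.ne').mp hx' with h | ⟨h, _⟩
  · left; exact Units.ext h
  · right; exact Units.ext (by simpa using h)

lemma bich_pm [Finite T] (u v : T) : β u v = 1 ∨ β u v = -1 := by
  have h : (β u v) ^ orderOf u = 1 := by
    rw [← bich_pow_left hβ, pow_orderOf_eq_one, bich_one_left hβ]
  exact units_real_pm (orderOf_pos u) h

lemma bich_symm [Finite T] (u v : T) : β u v = β v u := by
  have h := hβ.2.2 (u * v)
  rw [hβ.1, hβ.2.1, hβ.2.1, hβ.2.2, hβ.2.2, one_mul, mul_one] at h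
  -- h : β u v * β v u = 1
  rcases bich_pm hβ u v with h1 | h1 <;> rcases bich_pm hβ v u with h2 | h2 <;>
    rw [h1, h2] <;> rw [h1, h2] at h <;> first | rfl | (exfalso; revert h; norm_num)

lemma bich_sq_right [Finite T] (u t : T) : β u (t ^ 2) = 1 := by
  rw [bich_pow_right hβ]
  rcases bich_pm hβ u t with h | h <;> rw [h] <;> norm_num

end Prelim

section Basis

variable {G : Type*} [CommGroup G] {ι : Type*} [Fintype ι]

/-- surjectivity in exponent form -/
def FSurj (c : ι → G) : Prop := ∀ t : G, ∃ k : ι → ℤ, ∏ i : ι, c i ^ k i = t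

/-- injectivity in exponent form -/
def FInj (c : ι → G) : Prop :=
  ∀ k k' : ι → ℤ, ∏ i : ι, c i ^ k i = ∏ i : ι, c i ^ k' i → ∀ i, c i ^ k i = c i ^ k' i

lemma isBasisFamily_of (c : ι → G) (hs : FSurj c) (hi : FInj c) : IsBasisFamily c := by
  constructor
  · intro x y hxy
    simp only at hxy
    choose k hk using fun i => Subgroup.mem_zpowers_iff.mp (x i).2
    choose k' hk' using fun i => Subgroup.mem_zpowers_iff.mp (y i).2
    have h : ∏ i : ι, c i ^ k i = ∏ i : ι, c i ^ k' i := by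
      rw [Finset.prod_congr rfl fun i _ => hk i, Finset.prod_congr rfl fun i _ => hk' i]
      exact hxy
    funext i
    exact Subtype.ext (by rw [← hk i, ← hk' i]; exact hi k k' h i)
  · intro t
    obtain ⟨k, hk⟩ := hs t
    refine ⟨fun i => ⟨c i ^ k i, Subgroup.zpow_mem _ (Subgroup.mem_zpowers _) _⟩, ?_⟩
    simpa using hk

lemma fsurj_of_isBasisFamily (c : ι → G) (h : IsBasisFamily c) : FSurj c := by
  intro t
  obtain ⟨x, hx⟩ := h.2 t
  choose k hk using fun i => Subgroup.mem_zpowers_iff.mp (x i).2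
  exact ⟨k, by rw [Finset.prod_congr rfl fun i _ => hk i]; exact hx⟩

lemma finj_of_isBasisFamily (c : ι → G) (h : IsBasisFamily c) : FInj c := by
  intro k k' hkk i
  have h1 : (fun i => (⟨c i ^ k i, Subgroup.zpow_mem _ (Subgroup.mem_zpowers _) _⟩ :
      Subgroup.zpowers (c i))) = (fun i => ⟨c i ^ k' i, Subgroup.zpow_mem _ (Subgroup.mem_zpowers _) _⟩) := by
    apply h.1
    simpa using hkk
  exact congrArg Subtype.val (congrFun h1 i)

/-- powers mod 2 -/
lemma zpow_sq_one {g : G} (hg : g ^ 2 = 1) (k : ℤ) : g ^ k = g ^ (k % 2) := by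
  conv_lhs => rw [← Int.mul_ediv_add_emod k 2, zpow_add, zpow_mul]
  rw [show g ^ (2:ℤ) = 1 from by exact_mod_cast hg, one_zpow, one_mul]

lemma zpow_eq_of_sq_one {g : G} (hg : g ^ 2 = 1) {k k' : ℤ} (h : k % 2 = k' % 2) :
    g ^ k = g ^ k' := by
  rw [zpow_sq_one hg k, zpow_sq_one hg k', h]

lemma neg_one_zpow_parity {k k' : ℤ} (h : ((-1 : ℝˣ)) ^ k = (-1) ^ k') : k % 2 = k' % 2 := by
  by_contra hne
  have h1 := zpow_sq_one (G := ℝˣ) (g := -1) (by norm_num) k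
  have h2 := zpow_sq_one (G := ℝˣ) (g := -1) (by norm_num) k'
  rw [h1, h2] at h
  have e1 := Int.emod_two_eq_zero_or_one k
  have e2 := Int.emod_two_eq_zero_or_one k'
  rcases e1 with e1 | e1 <;> rcases e2 with e2 | e2 <;> rw [e1, e2] at h <;>
    simp_all <;> revert h <;> decide
end Basis

section Orth

variable {T : Type*} [CommGroup T] {β : T → T → ℝˣ}

/-- orthogonal complement of a pair -/
def orthS (hβ : IsAltBichar β) (u v : T) : Subgroup T where
  carrier := {t | β t u = 1 ∧ β t v = 1}
  one_mem' := ⟨bich_one_left hβ u, bich_one_left hβ v⟩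
  mul_mem' := fun ha hb => ⟨by rw [hβ.1, ha.1, hb.1, mul_one],
    by rw [hβ.1, ha.2, hb.2, mul_one]⟩
  inv_mem' := fun ha => ⟨by rw [show β _ _ = (bichL hβ _) _ from rfl, map_inv,
      show (bichL hβ _) _ = β _ _ from rfl, ha.1, inv_one],
    by rw [show β _ _ = (bichL hβ _) _ from rfl, map_inv,
      show (bichL hβ _) _ = β _ _ from rfl, ha.2, inv_one]⟩

lemma mem_orthS {hβ : IsAltBichar β} {u v t : T} :
    t ∈ orthS hβ u v ↔ β t u = 1 ∧ β t v = 1 := Iff.rfl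

variable [Finite T]

lemma dec (hβ : IsAltBichar β) {u v : T} (huv : β u v = -1) (t : T) :
    ∃ (i j : ℤ) (s : T), s ∈ orthS hβ u v ∧ t = u ^ i * v ^ j * s := by
  have hvu : β v u = -1 := by rw [bich_symm hβ v u]; exact huv
  obtain ⟨i, hi⟩ : ∃ i : ℤ, β t v = (-1) ^ i := by
    rcases bich_pm hβ t v with h | h
    · exact ⟨0, by rw [h]; norm_num⟩
    · exact ⟨1, by rw [h]; norm_num⟩
  obtain ⟨j, hj⟩ : ∃ j : ℤ, β t u = (-1) ^ j := by
    rcases bich_pm hβ t u with h | h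
    · exact ⟨0, by rw [h]; norm_num⟩
    · exact ⟨1, by rw [h]; norm_num⟩
  refine ⟨i, j, u ^ (-i) * v ^ (-j) * t, ⟨?_, ?_⟩, ?_⟩
  · rw [hβ.1, hβ.1, bich_zpow_left hβ, bich_zpow_left hβ, hβ.2.2 u, one_zpow, one_mul,
      hvu, hj]
    rw [← zpow_add]
    norm_num
  · rw [hβ.1, hβ.1, bich_zpow_left hβ, bich_zpow_left hβ, hβ.2.2 v, one_zpow, huv, hi]
    rw [mul_comm ((-1:ℝˣ) ^ (-i)) 1, one_mul, ← zpow_add]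
    norm_num
  · have hre : u ^ i * v ^ j * (u ^ (-i) * v ^ (-j) * t)
        = (u ^ i * u ^ (-i)) * ((v ^ j * v ^ (-j)) * t) := by ac_rfl
    rw [hre, ← zpow_add, ← zpow_add]
    norm_num

lemma cancel (hβ : IsAltBichar β) {u v : T} (huv : β u v = -1) (hu2 : u ^ 2 = 1)
    (hv2 : v ^ 2 = 1) {i j i' j' : ℤ} {s s' : T}
    (hs : s ∈ orthS hβ u v) (hs' : s' ∈ orthS hβ u v)
    (h : u ^ i * v ^ j * s = u ^ i' * v ^ j' * s') :
    u ^ i = u ^ i' ∧ v ^ j = v ^ j' ∧ s = s' := by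
  have hvu : β v u = -1 := by rw [bich_symm hβ v u]; exact huv
  have e1 := congrArg (fun t => β t v) h
  simp only [hβ.1, bich_zpow_left hβ, hβ.2.2 v, one_zpow, mul_one, hs.2, hs'.2, huv] at e1
  have hu : u ^ i = u ^ i' := zpow_eq_of_sq_one hu2 (neg_one_zpow_parity e1)
  have e2 := congrArg (fun t => β t u) h
  simp only [hβ.1, bich_zpow_left hβ, hβ.2.2 u, one_zpow, one_mul, hs.1, hs'.1, hvu,
    mul_one] at e2
  have hv : v ^ j = v ^ j' := zpow_eq_of_sq_one hv2 (neg_one_zpow_parity e2)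
  refine ⟨hu, hv, ?_⟩
  rw [hu, hv] at h
  exact mul_left_cancel h

end Orth

section Reindex

variable {G : Type*} [CommGroup G] {ι κ : Type*} [Fintype ι] [Fintype κ]

lemma fsurj_reindex (σ : κ ≃ ι) {c : ι → G} (h : FSurj c) : FSurj (c ∘ σ) := by
  intro t
  obtain ⟨k, hk⟩ := h t
  refine ⟨k ∘ σ, ?_⟩
  rw [show ∏ j : κ, (c ∘ σ) j ^ (k ∘ σ) j = ∏ j : κ, (fun i => c i ^ k i) (σ j) from rfl,
    Equiv.prod_comp σ (fun i => c i ^ k i)]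
  exact hk

lemma finj_reindex (σ : κ ≃ ι) {c : ι → G} (h : FInj c) : FInj (c ∘ σ) := by
  intro k k' hkk j
  have key : ∀ (l : κ → ℤ), ∏ x : κ, (c ∘ σ) x ^ l x = ∏ i : ι, c i ^ (l ∘ σ.symm) i := by
    intro l
    rw [← Equiv.prod_comp σ (fun i => c i ^ (l ∘ σ.symm) i)]
    simp
  rw [key k, key k'] at hkk
  have := h _ _ hkk (σ j)
  simpa using this

end Reindex

section Ext

variable {T : Type*} [CommGroup T] [Finite T] {β : T → T → ℝˣ}

omit [Finite T] in
lemma prod_formula {ι' : Type*} [Fintype ι'] (u v : T) (C : ι' → T) (k : Bool ⊕ ι' → ℤ) :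
    ∏ x : Bool ⊕ ι', (Sum.elim (fun bb : Bool => if bb then v else u) C) x ^ k x
      = u ^ k (Sum.inl false) * v ^ k (Sum.inl true) * ∏ y : ι', C y ^ k (Sum.inr y) := by
  rw [Fintype.prod_sum_type]
  congr 1
  rw [show ∀ g : Bool → T, ∏ b : Bool, g b = g true * g false from fun g => Fintype.prod_bool g]
  simp [mul_comm]

lemma ext_step (hβ : IsAltBichar β) {u v : T}
    (huv : β u v = -1) (hu2 : u ^ 2 = 1) (hv2 : v ^ 2 = 1)
    {ι' : Type*} [Fintype ι'] {C : ι' → T} (hC : ∀ x, C x ∈ orthS hβ u v)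
    (hsurj : ∀ t ∈ orthS hβ u v, ∃ k : ι' → ℤ, ∏ x : ι', C x ^ k x = t)
    (hinj : ∀ k k' : ι' → ℤ, ∏ x : ι', C x ^ k x = ∏ x : ι', C x ^ k' x →
      ∀ x, C x ^ k x = C x ^ k' x) :
    FSurj (Sum.elim (fun bb : Bool => if bb then v else u) C) ∧
    FInj (Sum.elim (fun bb : Bool => if bb then v else u) C) := by
  constructor
  · intro t
    obtain ⟨i, j, s, hsmem, rfl⟩ := dec hβ huv t
    obtain ⟨k', hk'⟩ := hsurj s hsmem
    refine ⟨Sum.elim (fun bb => if bb then j else i) k', ?_⟩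
    rw [prod_formula]
    simp only [Sum.elim_inl, Sum.elim_inr, if_true, if_false, Bool.false_eq_true]
    rw [hk']
  · intro k k' h x
    rw [prod_formula, prod_formula] at h
    have hP : ∏ y : ι', C y ^ k (Sum.inr y) ∈ orthS hβ u v :=
      Subgroup.prod_mem _ (fun y _ => Subgroup.zpow_mem _ (hC y) _)
    have hP' : ∏ y : ι', C y ^ k' (Sum.inr y) ∈ orthS hβ u v :=
      Subgroup.prod_mem _ (fun y _ => Subgroup.zpow_mem _ (hC y) _)
    obtain ⟨h1, h2, h3⟩ := cancel hβ huv hu2 hv2 hP hP' h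
    rcases x with bb | y
    · cases bb
      · simpa using h1
      · simpa using h2
    · simpa using hinj _ _ h3 y

end Ext

section Transfer

variable {T : Type*} [CommGroup T]

lemma subgroup_transfer {S : Subgroup T} {ι : Type*} [Fintype ι] (d : ι → ↥S)
    (h : IsBasisFamily d) :
    (∀ t ∈ S, ∃ k : ι → ℤ, ∏ x : ι, ((d x : T)) ^ k x = t) ∧
    (∀ k k' : ι → ℤ, ∏ x : ι, (d x : T) ^ k x = ∏ x : ι, (d x : T) ^ k' x →
      ∀ x, (d x : T) ^ k x = (d x : T) ^ k' x) := by
  have key : ∀ k : ι → ℤ, ∏ x : ι, (d x : T) ^ k x = ((∏ x : ι, d x ^ k x : ↥S) : T) := by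
    intro k
    push_cast
    rfl
  constructor
  · intro t ht
    obtain ⟨k, hk⟩ := fsurj_of_isBasisFamily d h ⟨t, ht⟩
    exact ⟨k, by rw [key k, hk]⟩
  · intro k k' hkk x
    rw [key k, key k'] at hkk
    have := finj_of_isBasisFamily d h k k' (Subtype.val_injective hkk) x
    exact congrArg Subtype.val (by push_cast at this ⊢; exact_mod_cast this)

end Transfer

section Eqvs

def eqv2 (m' : ℕ) : Fin (m' + 1) × Bool ≃ Bool ⊕ (Fin m' × Bool) where
  toFun p := Fin.cases (Sum.inl p.2) (fun i => Sum.inr (i, p.2)) p.1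
  invFun := Sum.elim (fun bb => (0, bb)) (fun q => (q.1.succ, q.2))
  left_inv := by rintro ⟨i, bb⟩; induction i using Fin.cases <;> simp
  right_inv := by rintro (bb | ⟨i, bb⟩) <;> simp

def eqv1 (m' : ℕ) : (Fin (m' + 1) × Bool) ⊕ Unit ≃ Bool ⊕ ((Fin m' × Bool) ⊕ Unit) :=
  ((eqv2 m').sumCongr (Equiv.refl Unit)).trans (Equiv.sumAssoc _ _ _)

@[simp] lemma eqv2_zero (m' : ℕ) (bb : Bool) : eqv2 m' (0, bb) = Sum.inl bb := rfl

@[simp] lemma eqv2_succ (m' : ℕ) (i : Fin m') (bb : Bool) :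
    eqv2 m' (i.succ, bb) = Sum.inr (i, bb) := by
  simp [eqv2]

@[simp] lemma eqv1_zero (m' : ℕ) (bb : Bool) :
    eqv1 m' (Sum.inl (0, bb)) = Sum.inl bb := rfl

@[simp] lemma eqv1_succ (m' : ℕ) (i : Fin m') (bb : Bool) :
    eqv1 m' (Sum.inl (i.succ, bb)) = Sum.inr (Sum.inl (i, bb)) := by
  simp [eqv1]

@[simp] lemma eqv1_inr (m' : ℕ) (x : Unit) :
    eqv1 m' (Sum.inr x) = Sum.inr (Sum.inr x) := rfl

lemma prod_fin1bool {G : Type*} [CommMonoid G] (g : Fin 1 × Bool → G) :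
    ∏ p : Fin 1 × Bool, g p = g (0, true) * g (0, false) := by
  rw [Fintype.prod_prod_type]
  simp

end Eqvs

section Core

def CoreConcl {T : Type*} [CommGroup T] (β : T → T → ℝˣ) (f : T) : Prop :=
  ∃ (m : ℕ) (a b : Fin m → T), IsSymplecticFamily β a b ∧
    (((∀ i, a i ^ 2 = 1 ∧ b i ^ 2 = 1) ∧
       IsBasisFamily (Sum.elim (fun p : Fin m × Bool => if p.2 then b p.1 else a p.1)
         (fun _ : Unit => f))) ∨
     (∃ _ : 1 ≤ m, (∀ i, a i ^ 2 = 1) ∧ (∀ i : Fin m, (i : ℕ) < m - 1 → b i ^ 2 = 1) ∧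
       (∀ h : m - 1 < m, b ⟨m - 1, h⟩ ^ 2 = f) ∧
       IsBasisFamily (fun p : Fin m × Bool => if p.2 then b p.1 else a p.1)))

universe u

lemma core : ∀ (n : ℕ) (T : Type u) [CommGroup T] [Fintype T], Fintype.card T < n →
    ∀ (β : T → T → ℝˣ), IsAltBichar β → ∀ f : T, orderOf f = 2 →
    (∀ t : T, (∀ u : T, β u t = 1) ↔ (t = 1 ∨ t = f)) → CoreConcl β f := by
  intro n
  induction n with
  | zero => intro T _ _ hcard; omega
  | succ n IH =>
    intro T _ _ hcard β hβ f hford hII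
    have hf1 : f ≠ 1 := by
      intro h; rw [h, orderOf_one] at hford; omega
    have hf2 : f ^ 2 = 1 := by rw [← hford]; exact pow_orderOf_eq_one f
    have hβf : ∀ t : T, β t f = 1 := fun t => ((hII f).mpr (Or.inr rfl)) t
    have hsq : ∀ t : T, t ^ 2 = 1 ∨ t ^ 2 = f := fun t =>
      (hII (t ^ 2)).mp (fun w => bich_sq_right hβ w t)
    by_cases htriv : ∀ x y : T, β x y = 1
    · -- trivial bicharacter: T = {1, f}
      have hTf : ∀ t : T, t = 1 ∨ t = f := fun t => (hII t).mp (fun w => htriv w t)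
      refine ⟨0, (fun i => i.elim0), (fun i => i.elim0),
        ⟨fun i => i.elim0, fun i _ => i.elim0, fun i _ => i.elim0, fun i _ _ => i.elim0⟩,
        Or.inl ⟨fun i => i.elim0, isBasisFamily_of _ ?_ ?_⟩⟩
      · intro t
        rcases hTf t with rfl | rfl
        · exact ⟨fun _ => 0, by simp⟩
        · refine ⟨Sum.elim (fun p => 0) (fun _ => 1), ?_⟩
          rw [Fintype.prod_sum_type]
          simp
      · intro k k' h x
        rw [Fintype.prod_sum_type] at h
        simp only [Finset.univ_eq_empty, Finset.prod_empty, one_mul] at h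
        rcases x with p | x
        · exact p.1.elim0
        · cases x
          simpa using h
    · push_neg at htriv
      obtain ⟨u₀, v₀, hne0⟩ := htriv
      have huv0 : β u₀ v₀ = -1 := (bich_pm hβ u₀ v₀).resolve_left hne0
      by_cases hpair : ∃ p q : T, β p q = -1 ∧ p ^ 2 = 1 ∧ q ^ 2 = 1
      · -- main inductive step
        obtain ⟨u, v, huv, hu2, hv2⟩ := hpair
        have hvu : β v u = -1 := by rw [bich_symm hβ]; exact huv
        set S := orthS hβ u v with hSdef
        have hfS : f ∈ S := ⟨by rw [bich_symm hβ]; exact hβf u,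
          by rw [bich_symm hβ]; exact hβf v⟩
        haveI : Fintype ↥S := Fintype.ofFinite _
        have hcardS : Fintype.card ↥S < n := by
          have h1 : Fintype.card ↥S < Fintype.card T := by
            apply Fintype.card_lt_of_injective_of_notMem
              (Subtype.val : ↥S → T) Subtype.val_injective (b := u)
            rintro ⟨s, hs⟩
            have h2 := (mem_orthS.mp s.2).2
            rw [hs] at h2
            rw [huv] at h2
            exact absurd h2 (by norm_num)
          omega
        set βS : ↥S → ↥S → ℝˣ := fun s t => β ↑s ↑t with hβSdef
        have hβS : IsAltBichar βS :=
          ⟨fun a b c => hβ.1 ↑a ↑b ↑c, fun a b c => hβ.2.1 ↑a ↑b ↑c, fun a => hβ.2.2 ↑a⟩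
        have hfordS : orderOf (⟨f, hfS⟩ : ↥S) = 2 := by
          rw [← hford]
          exact (orderOf_injective S.subtype (Subgroup.subtype_injective S) _).symm
        have hIIS : ∀ t : ↥S, (∀ w : ↥S, βS w t = 1) ↔ (t = 1 ∨ t = ⟨f, hfS⟩) := by
          intro t
          constructor
          · intro hw
            have h3 : (t : T) = 1 ∨ (t : T) = f := by
              apply (hII ↑t).mp
              intro w
              obtain ⟨i, j, s₀, hs₀, rfl⟩ := dec hβ huv w
              rw [hβ.1, hβ.1, bich_zpow_left hβ, bich_zpow_left hβ,
                show β u ↑t = 1 from by rw [bich_symm hβ]; exact (mem_orthS.mp t.2).1,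
                show β v ↑t = 1 from by rw [bich_symm hβ]; exact (mem_orthS.mp t.2).2,
                show β s₀ ↑t = 1 from hw ⟨s₀, hs₀⟩]
              norm_num
            rcases h3 with h3 | h3
            · exact Or.inl (Subtype.ext h3)
            · exact Or.inr (Subtype.ext h3)
          · rintro (rfl | rfl) w
            · exact bich_one_right hβ ↑w
            · exact hβf ↑w
        obtain ⟨m', a', b', hsymp', hcase'⟩ := IH ↥S hcardS βS hβS ⟨f, hfS⟩ hfordS hIIS
        set A : Fin m' → T := fun i => ↑(a' i) with hA
        set B : Fin m' → T := fun i => ↑(b' i) with hB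
        have hAS : ∀ i, A i ∈ S := fun i => (a' i).2
        have hBS : ∀ i, B i ∈ S := fun i => (b' i).2
        set a1 : Fin (m' + 1) → T := Fin.cons u A with ha1
        set b1 : Fin (m' + 1) → T := Fin.cons v B with hb1
        have hsympl : IsSymplecticFamily β a1 b1 := by
          refine ⟨?_, ?_, ?_, ?_⟩
          · intro i
            induction i using Fin.cases with
            | zero => simpa [ha1, hb1] using ⟨huv, hvu⟩
            | succ i => simpa [ha1, hb1] using hsymp'.1 i
          · intro i j
            induction i using Fin.cases with
            | zero =>
              induction j using Fin.cases with
              | zero => simpa [ha1] using hβ.2.2 u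
              | succ j =>
                simp only [ha1, hb1, Fin.cons_zero, Fin.cons_succ]
                rw [bich_symm hβ]
                exact (mem_orthS.mp (hAS j)).1
            | succ i =>
              induction j using Fin.cases with
              | zero =>
                simp only [ha1, hb1, Fin.cons_zero, Fin.cons_succ]
                exact (mem_orthS.mp (hAS i)).1
              | succ j => simpa [ha1] using hsymp'.2.1 i j
          · intro i j
            induction i using Fin.cases with
            | zero =>
              induction j using Fin.cases with
              | zero => simpa [hb1] using hβ.2.2 v
              | succ j =>
                simp only [ha1, hb1, Fin.cons_zero, Fin.cons_succ]
                rw [bich_symm hβ]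
                exact (mem_orthS.mp (hBS j)).2
            | succ i =>
              induction j using Fin.cases with
              | zero =>
                simp only [ha1, hb1, Fin.cons_zero, Fin.cons_succ]
                exact (mem_orthS.mp (hBS i)).2
              | succ j => simpa [hb1] using hsymp'.2.2.1 i j
          · intro i j hij
            induction i using Fin.cases with
            | zero =>
              induction j using Fin.cases with
              | zero => exact absurd rfl hij
              | succ j =>
                simp only [ha1, hb1, Fin.cons_zero, Fin.cons_succ]
                constructor
                · rw [bich_symm hβ]; exact (mem_orthS.mp (hBS j)).1
                · rw [bich_symm hβ]; exact (mem_orthS.mp (hAS j)).2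
            | succ i =>
              induction j using Fin.cases with
              | zero =>
                simp only [ha1, hb1, Fin.cons_zero, Fin.cons_succ]
                exact ⟨(mem_orthS.mp (hAS i)).2, (mem_orthS.mp (hBS i)).1⟩
              | succ j =>
                have hij' : i ≠ j := fun h => hij (congrArg Fin.succ h)
                simpa [ha1, hb1] using hsymp'.2.2.2 i j hij'
        refine ⟨m' + 1, a1, b1, hsympl, ?_⟩
        rcases hcase' with ⟨hsq', hbasis'⟩ | ⟨hm', hsqa', hsqb', hlast', hbasis'⟩
        · -- subcase A'
          obtain ⟨hsurjC, hinjC⟩ := subgroup_transfer _ hbasis'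
          set C : (Fin m' × Bool) ⊕ Unit → T :=
            fun x => ((Sum.elim (fun p : Fin m' × Bool => if p.2 then b' p.1 else a' p.1)
              (fun _ : Unit => (⟨f, hfS⟩ : ↥S)) x : ↥S) : T) with hC
          have hCS : ∀ x, C x ∈ S := fun x => (Sum.elim _ _ x : ↥S).2
          obtain ⟨hFS, hFI⟩ := ext_step hβ huv hu2 hv2 hCS hsurjC hinjC
          have hcompat : (Sum.elim (fun p : Fin (m' + 1) × Bool =>
              if p.2 then b1 p.1 else a1 p.1) (fun _ : Unit => f)) =
              (Sum.elim (fun bb : Bool => if bb then v else u) C) ∘ (eqv1 m') := by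
            funext x
            rcases x with ⟨i, bb⟩ | x
            · induction i using Fin.cases with
              | zero => cases bb <;> simp [ha1, hb1]
              | succ i => cases bb <;> simp [ha1, hb1, hC, hA, hB]
            · cases x; simp [hC]
          refine Or.inl ⟨?_, ?_⟩
          · intro i
            induction i using Fin.cases with
            | zero => simpa [ha1, hb1] using ⟨hu2, hv2⟩
            | succ i =>
              have h1 := congrArg (Subtype.val : ↥S → T) (hsq' i).1
              have h2 := congrArg (Subtype.val : ↥S → T) (hsq' i).2
              push_cast at h1 h2
              simpa [ha1, hb1, hA, hB] using ⟨h1, h2⟩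
          · rw [hcompat]
            exact isBasisFamily_of _ (fsurj_reindex (eqv1 m') hFS)
              (finj_reindex (eqv1 m') hFI)
        · -- subcase B'
          obtain ⟨hsurjC, hinjC⟩ := subgroup_transfer _ hbasis'
          set C : Fin m' × Bool → T :=
            fun p => (((if p.2 then b' p.1 else a' p.1) : ↥S) : T) with hC
          have hCS : ∀ x, C x ∈ S := fun x => ((if x.2 then b' x.1 else a' x.1) : ↥S).2
          obtain ⟨hFS, hFI⟩ := ext_step hβ huv hu2 hv2 hCS hsurjC hinjC
          have hcompat : (fun p : Fin (m' + 1) × Bool =>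
              if p.2 then b1 p.1 else a1 p.1) =
              (Sum.elim (fun bb : Bool => if bb then v else u) C) ∘ (eqv2 m') := by
            funext p
            obtain ⟨i, bb⟩ := p
            induction i using Fin.cases with
            | zero => cases bb <;> simp [ha1, hb1]
            | succ i => cases bb <;> simp [ha1, hb1, hC, hA, hB]
          refine Or.inr ⟨by omega, ?_, ?_, ?_, ?_⟩
          · intro i
            induction i using Fin.cases with
            | zero => simpa [ha1] using hu2
            | succ i =>
              have h1 := congrArg (Subtype.val : ↥S → T) (hsqa' i)
              push_cast at h1
              simpa [ha1, hA] using h1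
          · intro i hi
            induction i using Fin.cases with
            | zero => simpa [hb1] using hv2
            | succ i =>
              have hi' : (i : ℕ) < m' - 1 := by
                simp only [Fin.val_succ] at hi
                omega
              have h1 := congrArg (Subtype.val : ↥S → T) (hsqb' i hi')
              push_cast at h1
              simpa [hb1, hB] using h1
          · intro h
            have hmm : (⟨m' + 1 - 1, h⟩ : Fin (m' + 1)) =
                Fin.succ ⟨m' - 1, by omega⟩ := by
              apply Fin.ext
              simp
              omega
            rw [hmm]
            simp only [hb1, Fin.cons_succ]
            have h1 := congrArg (Subtype.val : ↥S → T) (hlast' (by omega))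
            push_cast at h1
            simpa [hb1, hB] using h1
          · rw [hcompat]
            exact isBasisFamily_of _ (fsurj_reindex (eqv2 m') hFS)
              (finj_reindex (eqv2 m') hFI)
      · -- case (ii): no pair of order-2 elements; S = {1, f}
        obtain ⟨u, v, huv, hu2, hv2f⟩ : ∃ u v : T, β u v = -1 ∧ u ^ 2 = 1 ∧ v ^ 2 = f := by
          rcases hsq u₀ with h0 | h0 <;> rcases hsq v₀ with h1 | h1
          · exact absurd ⟨u₀, v₀, huv0, h0, h1⟩ hpair
          · exact ⟨u₀, v₀, huv0, h0, h1⟩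
          · exact ⟨v₀, u₀, by rw [bich_symm hβ]; exact huv0, h1, h0⟩
          · refine ⟨u₀ * v₀, v₀, ?_, ?_, h1⟩
            · rw [hβ.1, huv0, hβ.2.2, mul_one]
            · rw [mul_pow, h0, h1, ← sq, hf2]
        have hvu : β v u = -1 := by rw [bich_symm hβ]; exact huv
        set S := orthS hβ u v with hSdef
        have claim1 : ∀ x ∈ S, x ^ 2 = 1 := by
          intro x hx
          rcases hsq x with h | h
          · exact h
          · exfalso
            apply hpair
            refine ⟨u, v * x, ?_, hu2, ?_⟩
            · rw [hβ.2.1, huv, show β u x = 1 from by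
                rw [bich_symm hβ]; exact (mem_orthS.mp hx).1, mul_one]
            · rw [mul_pow, hv2f, h, ← sq, hf2]
        have claim2 : ∀ x y : T, x ∈ S → y ∈ S → β x y = 1 := by
          intro x y hx hy
          by_contra hne
          have h1 : β x y = -1 := (bich_pm hβ x y).resolve_left hne
          exact hpair ⟨x, y, h1, claim1 x hx, claim1 y hy⟩
        have hS : ∀ s ∈ S, s = 1 ∨ s = f := by
          intro s hs
          apply (hII s).mp
          intro t
          obtain ⟨i, j, s₀, hs₀, rfl⟩ := dec hβ huv t
          rw [hβ.1, hβ.1, bich_zpow_left hβ, bich_zpow_left hβ,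
            show β u s = 1 from by rw [bich_symm hβ]; exact (mem_orthS.mp hs).1,
            show β v s = 1 from by rw [bich_symm hβ]; exact (mem_orthS.mp hs).2,
            claim2 s₀ s hs₀ hs]
          norm_num
        have hv2' : v ^ (2 : ℤ) = f := by
          rw [show (2 : ℤ) = ((2 : ℕ) : ℤ) from rfl, zpow_natCast]
          exact hv2f
        refine ⟨1, fun _ => u, fun _ => v,
          ⟨fun i => ⟨huv, hvu⟩, fun i j => hβ.2.2 u, fun i j => hβ.2.2 v,
            fun i j hij => absurd (Subsingleton.elim i j) hij⟩,
          Or.inr ⟨le_refl 1, fun i => hu2, fun i hi => absurd hi (by omega),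
            fun h => hv2f, isBasisFamily_of _ ?_ ?_⟩⟩
        · intro t
          obtain ⟨i, j, s, hs, rfl⟩ := dec hβ huv t
          rcases hS s hs with rfl | hsf
          · refine ⟨fun p => if p.2 then j else i, ?_⟩
            rw [prod_fin1bool]
            simp only [Bool.false_eq_true, if_true, if_false]
            rw [mul_one, mul_comm]
          · refine ⟨fun p => if p.2 then j + 2 else i, ?_⟩
            rw [prod_fin1bool]
            simp only [Bool.false_eq_true, if_true, if_false]
            rw [zpow_add, hv2', hsf]
            have hre : v ^ j * f * u ^ i = u ^ i * v ^ j * f := by ac_rfl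
            rw [hre]
        · intro k k' h x
          rw [prod_fin1bool, prod_fin1bool] at h
          simp only [Bool.false_eq_true, if_true, if_false] at h
          have e1 := congrArg (fun t => β t v) h
          simp only [hβ.1, bich_zpow_left hβ, hβ.2.2 v, one_zpow, one_mul, huv] at e1
          have hu' : u ^ k (0, false) = u ^ k' (0, false) :=
            zpow_eq_of_sq_one hu2 (neg_one_zpow_parity e1)
          rw [hu'] at h
          have hv' : v ^ k (0, true) = v ^ k' (0, true) := mul_right_cancel h
          obtain ⟨i, bb⟩ := x
          have : i = 0 := Subsingleton.elim i 0
          subst this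
          cases bb
          · simpa using hu'
          · simpa using hv'

end Core

section BuildHelpers

variable {G : Type*} [CommGroup G]

lemma pow_val_add2 {g : G} (hg : g ^ 2 = 1) (x y : ZMod 2) :
    g ^ (x + y).val = g ^ x.val * g ^ y.val := by
  rw [← pow_add, ZMod.val_add]
  exact pow_eq_pow_iff_modEq.mpr ((Nat.mod_modEq _ 2).of_dvd (orderOf_dvd_of_pow_eq_one hg))

lemma pow_val_add4 {g : G} (hg : g ^ 4 = 1) (x y : ZMod 4) :
    g ^ (x + y).val = g ^ x.val * g ^ y.val := by
  rw [← pow_add, ZMod.val_add]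
  exact pow_eq_pow_iff_modEq.mpr ((Nat.mod_modEq _ 4).of_dvd (orderOf_dvd_of_pow_eq_one hg))

lemma zpow_val2 {g : G} (hg : g ^ 2 = 1) (k : ℤ) :
    g ^ (((k : ZMod 2)).val) = g ^ k := by
  have h1 : (((k : ZMod 2).val : ℤ)) = k % 2 := ZMod.val_intCast k
  rw [← zpow_natCast, h1, ← zpow_sq_one hg]

lemma zpow_val4 {g : G} (hg : g ^ 4 = 1) (k : ℤ) :
    g ^ (((k : ZMod 4)).val) = g ^ k := by
  have h1 : (((k : ZMod 4).val : ℤ)) = k % 4 := ZMod.val_intCast k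
  rw [← zpow_natCast, h1]
  conv_rhs => rw [← Int.mul_ediv_add_emod k 4, zpow_add, zpow_mul,
    (by exact_mod_cast hg : g ^ (4 : ℤ) = 1), one_zpow, one_mul]

lemma order_four {g : G} (hg2 : g ^ 2 ≠ 1) (hg4 : g ^ 4 = 1) : orderOf g = 4 := by
  have hdvd := orderOf_dvd_of_pow_eq_one hg4
  have h1 : 0 < orderOf g := Nat.pos_of_dvd_of_pos hdvd (by norm_num)
  have h4 : orderOf g ≤ 4 := Nat.le_of_dvd (by norm_num) hdvd
  have ho1 : orderOf g ≠ 1 := by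
    intro h
    exact hg2 (by rw [orderOf_eq_one_iff.mp h]; simp)
  have ho2 : orderOf g ≠ 2 := by
    intro h
    exact hg2 (by rw [← h]; exact pow_orderOf_eq_one g)
  have ho3 : orderOf g ≠ 3 := by
    intro h
    rw [h] at hdvd
    norm_num at hdvd
  omega

end BuildHelpers

section BuildA

variable {T : Type*} [CommGroup T] [Fintype T]

omit [CommGroup T] [Fintype T] in
lemma prod_prod_bool_split {M : Type*} [CommMonoid M] {m : ℕ} (g : Fin m × Bool → M) :
    ∏ p : Fin m × Bool, g p = ∏ i : Fin m, (g (i, false) * g (i, true)) := by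
  rw [Fintype.prod_prod_type]
  exact Finset.prod_congr rfl (fun i _ => by rw [Fintype.prod_bool, mul_comm])

omit [CommGroup T] [Fintype T] in
lemma prod_split_last {M : Type*} [CommMonoid M] {K : ℕ} (g : Fin (K + 1) × Bool → M) :
    ∏ p : Fin (K + 1) × Bool, g p =
      (∏ i : Fin K, g (i.castSucc, false) * g (i.castSucc, true)) *
        (g (Fin.last K, false) * g (Fin.last K, true)) := by
  rw [prod_prod_bool_split g, Fin.prod_univ_castSucc]

lemma buildA {m : ℕ} {a b : Fin m → T} {f : T}
    (ha2 : ∀ i, a i ^ 2 = 1) (hb2 : ∀ i, b i ^ 2 = 1) (hf2 : f ^ 2 = 1)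
    (ha1 : ∀ i, a i ≠ 1) (hb1 : ∀ i, b i ≠ 1) (hf1 : f ≠ 1)
    (hbasis : IsBasisFamily (Sum.elim
      (fun p : Fin m × Bool => if p.2 then b p.1 else a p.1) (fun _ : Unit => f))) :
    Nonempty (T ≃* Multiplicative ((Fin m → ZMod 2 × ZMod 2) × ZMod 2)) := by
  set c : (Fin m × Bool) ⊕ Unit → T := Sum.elim
    (fun p : Fin m × Bool => if p.2 then b p.1 else a p.1) (fun _ : Unit => f) with hc
  set F₀ : (Fin m → ZMod 2 × ZMod 2) × ZMod 2 → T :=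
    fun x => (∏ i : Fin m, a i ^ (x.1 i).1.val * b i ^ (x.1 i).2.val) * f ^ x.2.val with hF₀
  have hadd : ∀ x y : (Fin m → ZMod 2 × ZMod 2) × ZMod 2, F₀ (x + y) = F₀ x * F₀ y := by
    intro x y
    simp only [hF₀, Prod.fst_add, Prod.snd_add, Pi.add_apply]
    have h1 : ∀ i ∈ Finset.univ, a i ^ ((x.1 i).1 + (y.1 i).1).val *
        b i ^ ((x.1 i).2 + (y.1 i).2).val
        = (a i ^ (x.1 i).1.val * b i ^ (x.1 i).2.val) *
          (a i ^ (y.1 i).1.val * b i ^ (y.1 i).2.val) := fun i _ => by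
      rw [pow_val_add2 (ha2 i), pow_val_add2 (hb2 i), mul_mul_mul_comm]
    rw [Finset.prod_congr rfl h1, Finset.prod_mul_distrib, pow_val_add2 hf2,
      mul_mul_mul_comm]
  set F : Multiplicative ((Fin m → ZMod 2 × ZMod 2) × ZMod 2) →* T :=
    MonoidHom.mk' (fun x => F₀ x.toAdd) (fun x y => hadd x.toAdd y.toAdd) with hF
  have hsurj : Function.Surjective F := by
    intro t
    obtain ⟨k, hk⟩ := fsurj_of_isBasisFamily c hbasis t
    refine ⟨Multiplicative.ofAdd
      (fun i => ((k (Sum.inl (i, false)) : ZMod 2), (k (Sum.inl (i, true)) : ZMod 2)),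
        (k (Sum.inr ()) : ZMod 2)), ?_⟩
    show F₀ _ = t
    rw [← hk]
    simp only [hF₀, toAdd_ofAdd]
    rw [Fintype.prod_sum_type]
    congr 1
    · rw [prod_prod_bool_split (fun p => c (Sum.inl p) ^ k (Sum.inl p))]
      refine Finset.prod_congr rfl (fun i _ => ?_)
      simp only [hc, Sum.elim_inl, Bool.false_eq_true, if_true, if_false]
      rw [zpow_val2 (ha2 i), zpow_val2 (hb2 i)]
    · rw [Fintype.prod_unique (fun x : Unit => c (Sum.inr x) ^ k (Sum.inr x))]
      simp only [hc, Sum.elim_inr]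
      rw [zpow_val2 hf2]
  have hcardT : Fintype.card T = 2 ^ (2 * m + 1) := by
    have h0 : Fintype.card ((x : (Fin m × Bool) ⊕ Unit) → Subgroup.zpowers (c x)) =
        Fintype.card T := Fintype.card_of_bijective hbasis
    rw [← h0, Fintype.card_pi]
    have h2 : ∀ x : (Fin m × Bool) ⊕ Unit, Fintype.card (Subgroup.zpowers (c x)) = 2 := by
      intro x
      rw [Fintype.card_zpowers]
      rcases x with ⟨i, bb⟩ | x
      · cases bb
        · simpa [hc] using orderOf_eq_prime (ha2 i) (ha1 i)
        · simpa [hc] using orderOf_eq_prime (hb2 i) (hb1 i)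
      · simpa [hc] using orderOf_eq_prime hf2 hf1
    rw [Finset.prod_congr rfl (fun x _ => h2 x), Finset.prod_const]
    rw [Finset.card_univ]
    congr 1
    simp [Fintype.card_sum, Fintype.card_prod]
    omega
  have hcardG : Fintype.card (Multiplicative ((Fin m → ZMod 2 × ZMod 2) × ZMod 2)) =
      2 ^ (2 * m + 1) := by
    simp only [Fintype.card_multiplicative, Fintype.card_prod, Fintype.card_fun,
      ZMod.card, Fintype.card_fin]
    rw [show (2 * 2 : ℕ) = 2 ^ 2 from rfl, ← pow_mul, ← pow_succ]
  have hbij : Function.Bijective F :=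
    (Fintype.bijective_iff_surjective_and_card F).mpr ⟨hsurj, by rw [hcardG, hcardT]⟩
  exact ⟨(MulEquiv.ofBijective F hbij).symm⟩

end BuildA

section BuildB

variable {T : Type*} [CommGroup T] [Fintype T]

lemma buildB {m : ℕ} (hm : 1 ≤ m) {a b : Fin m → T} {f : T}
    (ha2 : ∀ i, a i ^ 2 = 1) (hb2 : ∀ i : Fin m, (i : ℕ) < m - 1 → b i ^ 2 = 1)
    (hlast : ∀ h : m - 1 < m, b ⟨m - 1, h⟩ ^ 2 = f) (hf2 : f ^ 2 = 1)
    (ha1 : ∀ i, a i ≠ 1) (hb1 : ∀ i, b i ≠ 1) (hf1 : f ≠ 1)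
    (hbasis : IsBasisFamily (fun p : Fin m × Bool => if p.2 then b p.1 else a p.1)) :
    Nonempty (T ≃* Multiplicative ((Fin (m - 1) → ZMod 2 × ZMod 2) × (ZMod 2 × ZMod 4))) := by
  obtain ⟨K, rfl⟩ : ∃ K, m = K + 1 := ⟨m - 1, by omega⟩
  have hbL : b (Fin.last K) ^ 2 = f := hlast (by omega)
  have hb4 : b (Fin.last K) ^ 4 = 1 := by
    rw [show (4 : ℕ) = 2 * 2 from rfl, pow_mul, hbL, hf2]
  have hb2' : ∀ i : Fin K, b i.castSucc ^ 2 = 1 := fun i =>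
    hb2 i.castSucc (by simpa using i.2)
  set c : Fin (K + 1) × Bool → T := fun p => if p.2 then b p.1 else a p.1 with hc
  set F₀ : (Fin K → ZMod 2 × ZMod 2) × (ZMod 2 × ZMod 4) → T :=
    fun x => (∏ i : Fin K, a i.castSucc ^ (x.1 i).1.val * b i.castSucc ^ (x.1 i).2.val)
      * (a (Fin.last K) ^ x.2.1.val * b (Fin.last K) ^ x.2.2.val) with hF₀
  have hadd : ∀ x y, F₀ (x + y) = F₀ x * F₀ y := by
    intro x y
    simp only [hF₀, Prod.fst_add, Prod.snd_add, Pi.add_apply]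
    have h1 : ∀ i ∈ Finset.univ, a i.castSucc ^ ((x.1 i).1 + (y.1 i).1).val *
        b i.castSucc ^ ((x.1 i).2 + (y.1 i).2).val
        = (a i.castSucc ^ (x.1 i).1.val * b i.castSucc ^ (x.1 i).2.val) *
          (a i.castSucc ^ (y.1 i).1.val * b i.castSucc ^ (y.1 i).2.val) := fun i _ => by
      rw [pow_val_add2 (ha2 i.castSucc), pow_val_add2 (hb2' i), mul_mul_mul_comm]
    rw [Finset.prod_congr rfl h1, Finset.prod_mul_distrib, pow_val_add2 (ha2 (Fin.last K)),
      pow_val_add4 hb4, mul_mul_mul_comm (a (Fin.last K) ^ (x.2.1).val),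
      mul_mul_mul_comm]
  set F : Multiplicative ((Fin K → ZMod 2 × ZMod 2) × (ZMod 2 × ZMod 4)) →* T :=
    MonoidHom.mk' (fun x => F₀ x.toAdd) (fun x y => hadd x.toAdd y.toAdd) with hF
  have hsurj : Function.Surjective F := by
    intro t
    obtain ⟨k, hk⟩ := fsurj_of_isBasisFamily c hbasis t
    refine ⟨Multiplicative.ofAdd
      (fun i => ((k (i.castSucc, false) : ZMod 2), (k (i.castSucc, true) : ZMod 2)),
        ((k (Fin.last K, false) : ZMod 2), (k (Fin.last K, true) : ZMod 4))), ?_⟩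
    show F₀ _ = t
    rw [← hk]
    simp only [hF₀, toAdd_ofAdd]
    rw [prod_split_last (fun p => c p ^ k p)]
    congr 1
    · refine Finset.prod_congr rfl (fun i _ => ?_)
      simp only [hc, Bool.false_eq_true, if_true, if_false]
      rw [zpow_val2 (ha2 i.castSucc), zpow_val2 (hb2' i)]
    · simp only [hc, Bool.false_eq_true, if_true, if_false]
      rw [zpow_val2 (ha2 (Fin.last K)), zpow_val4 hb4]
  have hcardT : Fintype.card T = 2 ^ (2 * K + 3) := by
    have h0 : Fintype.card ((x : Fin (K + 1) × Bool) → Subgroup.zpowers (c x)) =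
        Fintype.card T := Fintype.card_of_bijective hbasis
    rw [← h0, Fintype.card_pi]
    have h2 : ∀ p : Fin (K + 1) × Bool,
        Fintype.card (Subgroup.zpowers (c p)) = if p = (Fin.last K, true) then 4 else 2 := by
      rintro ⟨i, bb⟩
      rw [Fintype.card_zpowers]
      by_cases hlst : (⟨i, bb⟩ : Fin (K + 1) × Bool) = (Fin.last K, true)
      · rw [if_pos hlst]
        obtain ⟨rfl, rfl⟩ := Prod.mk.injEq .. ▸ hlst
        simpa [hc] using order_four (by rw [hbL]; exact hf1) hb4
      · rw [if_neg hlst]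
        cases bb
        · simpa [hc] using orderOf_eq_prime (ha2 i) (ha1 i)
        · have hne : i ≠ Fin.last K := fun h => hlst (by rw [h])
          have : b i ^ 2 = 1 := hb2 i (by
            have := Fin.val_lt_last hne
            simpa using this)
          simpa [hc] using orderOf_eq_prime this (hb1 i)
    rw [Finset.prod_congr rfl (fun p _ => h2 p),
      prod_split_last (fun p : Fin (K + 1) × Bool => if p = (Fin.last K, true) then 4 else 2)]
    have h3 : ∀ i : Fin K, ((if ((i.castSucc, false) : Fin (K + 1) × Bool) = (Fin.last K, true)
        then 4 else 2) * if ((i.castSucc, true) : Fin (K + 1) × Bool) = (Fin.last K, true)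
        then 4 else 2) = (4 : ℕ) := by
      intro i
      have hne : i.castSucc ≠ Fin.last K := Fin.ne_last_of_lt (Fin.castSucc_lt_last i)
      rw [if_neg (by simp), if_neg (by simp [hne]), ]
    rw [Finset.prod_congr rfl (fun i _ => h3 i), Finset.prod_const, Finset.card_univ,
      Fintype.card_fin, if_neg (by simp), if_pos rfl]
    rw [show (4 : ℕ) = 2 ^ 2 from rfl, ← pow_mul, show (2 : ℕ) * 2 ^ 2 = 2 ^ 3 from rfl,
      ← pow_add]
  have hcardG : Fintype.card
      (Multiplicative ((Fin K → ZMod 2 × ZMod 2) × (ZMod 2 × ZMod 4))) = 2 ^ (2 * K + 3) := by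
    simp only [Fintype.card_multiplicative, Fintype.card_prod, Fintype.card_fun,
      ZMod.card, Fintype.card_fin]
    rw [show (2 * 2 : ℕ) = 2 ^ 2 from rfl, ← pow_mul, show (2 : ℕ) * 4 = 2 ^ 3 from rfl,
      ← pow_add]
  have hbij : Function.Bijective F :=
    (Fintype.bijective_iff_surjective_and_card F).mpr ⟨hsurj, by rw [hcardG, hcardT]⟩
  exact ⟨(MulEquiv.ofBijective F hbij).symm⟩

end BuildB

/-- If `β` is an alternating bicharacter of type II on a finite abelian group `T`
(with radical `{1, f}`, `f` of order 2), then either `T ≅ (ℤ₂×ℤ₂)^m × ℤ₂` or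
`T ≅ (ℤ₂×ℤ₂)^{m-1} × (ℤ₂×ℤ₄)` for some `m`, and there is a symplectic family
`a₁,b₁,…,a_m,b_m` such that in the first case `{a₁,b₁,…,a_m,b_m,f}` is a basis of `T`,
and in the second case `b_m² = f` and `{a₁,b₁,…,a_m,b_m}` is a basis of `T`. -/
theorem stmt4 {T : Type*} [CommGroup T] [Fintype T]
    (β : T → T → ℝˣ) (hβ : IsAltBichar β)
    (f : T) (hf : orderOf f = 2)
    (hII : ∀ t : T, (∀ u : T, β u t = 1) ↔ (t = 1 ∨ t = f)) :
    ∃ m : ℕ, ∃ a b : Fin m → T, IsSymplecticFamily β a b ∧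
      ((Nonempty (T ≃* Multiplicative ((Fin m → ZMod 2 × ZMod 2) × ZMod 2)) ∧
        IsBasisFamily (Sum.elim
          (fun p : Fin m × Bool => if p.2 then b p.1 else a p.1)
          (fun _ : Unit => f))) ∨
       (Nonempty (T ≃* Multiplicative ((Fin (m - 1) → ZMod 2 × ZMod 2) × (ZMod 2 × ZMod 4))) ∧
        ∃ hm : 1 ≤ m, (b ⟨m - 1, by omega⟩) ^ 2 = f ∧
          IsBasisFamily (fun p : Fin m × Bool => if p.2 then b p.1 else a p.1))) := by
  obtain ⟨m, a, b, hsymp, hcase⟩ :=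
    core (Fintype.card T + 1) T (Nat.lt_succ_self _) β hβ f hf hII
  have hf1 : f ≠ 1 := fun h => by rw [h, orderOf_one] at hf; omega
  have hf2 : f ^ 2 = 1 := by rw [← hf]; exact pow_orderOf_eq_one f
  have ha1 : ∀ i, a i ≠ 1 := by
    intro i h
    have h2 := (hsymp.1 i).1
    rw [h, bich_one_left hβ] at h2
    exact absurd h2 (by norm_num)
  have hb1 : ∀ i, b i ≠ 1 := by
    intro i h
    have h2 := (hsymp.1 i).2
    rw [h, bich_one_left hβ] at h2
    exact absurd h2 (by norm_num)
  refine ⟨m, a, b, hsymp, ?_⟩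
  rcases hcase with ⟨hsq, hbasis⟩ | ⟨hm, hsa, hsb, hlast, hbasis⟩
  · exact Or.inl
      ⟨buildA (fun i => (hsq i).1) (fun i => (hsq i).2) hf2 ha1 hb1 hf1 hbasis, hbasis⟩
  · exact Or.inr
      ⟨buildB hm hsa hsb hlast hf2 ha1 hb1 hf1 hbasis, hm, hlast (by omega), hbasis⟩
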